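/- arXiv:1612.05941 — 2 statements merged into one kernel-verified Lean document; each statement's English description precedes it below -/
import Mathlib

section
/- The Continuum Hypothesis (the cardinality of the continuum equals ℵ₁) holds if and only if there exists a function F : ℕ → (ℕ → ℕ) → (ℕ → ℕ) such that for all functions f, g : ℕ → ℕ there exists a natural number n with F n f = g or F n g = f. -/
open Cardinal Set

lemma stmt_0_aux :
    Cardinal.continuum.{0} = Cardinal.aleph.{0} 1 ↔
      ∃ F : ℕ → (ℕ → ℕ) → (ℕ → ℕ),
        ∀ f g : ℕ → ℕ, ∃ n : ℕ, F n f = g ∨ F n g = f := by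
  have hmk : #(ℕ → ℕ) = 𝔠 := by
    rw [Cardinal.mk_arrow]
    simp [Cardinal.aleph0_power_aleph0]
  constructor
  · intro hCH
    have h1 : #(ℕ → ℕ) = #((Cardinal.aleph.{0} 1).ord.ToType) := by
      rw [Cardinal.mk_ord_toType, hmk, hCH]
    obtain ⟨e⟩ := Cardinal.eq.mp h1
    have hcount : ∀ x : (Cardinal.aleph.{0} 1).ord.ToType, (Set.Iic x).Countable := by
      intro x
      have hIio : (Set.Iio x).Countable :=
        (Cardinal.countable_iff_lt_aleph_one _).2 (Cardinal.mk_Iio_ord_toType x)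
      have := hIio.insert x
      rwa [Set.Iio_insert] at this
    have hGex : ∀ x : (Cardinal.aleph.{0} 1).ord.ToType,
        ∃ G : ℕ → Set.Iic x, Function.Surjective G :=
      fun x => (hcount x).exists_surjective ⟨x, Set.mem_Iic.mpr le_rfl⟩
    choose G hG using hGex
    refine ⟨fun n f => e.symm ((G (e f) n : _)), fun f g => ?_⟩
    rcases le_total (e g) (e f) with h | h
    · obtain ⟨n, hn⟩ := hG (e f) ⟨e g, Set.mem_Iic.mpr h⟩
      refine ⟨n, Or.inl ?_⟩
      show e.symm ((G (e f) n : _)) = g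
      rw [hn]; simp
    · obtain ⟨n, hn⟩ := hG (e g) ⟨e f, Set.mem_Iic.mpr h⟩
      refine ⟨n, Or.inr ?_⟩
      show e.symm ((G (e g) n : _)) = f
      rw [hn]; simp
  · rintro ⟨F, hF⟩
    refine le_antisymm ?_ Cardinal.aleph_one_le_continuum
    by_contra hlt
    have hlt : (Cardinal.aleph.{0} 1) < 𝔠 := lt_of_not_ge hlt
    have hle : #((Cardinal.aleph.{0} 1).ord.ToType) ≤ #(ℕ → ℕ) := by
      rw [Cardinal.mk_ord_toType, hmk]; exact hlt.le
    obtain ⟨ι⟩ := Cardinal.le_def _ _ |>.1 hle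
    set U : Set (ℕ → ℕ) := ⋃ x, Set.range (fun n => F n (ι x)) with hU
    have hUcard : #U < #(ℕ → ℕ) := by
      calc #U ≤ #((Cardinal.aleph.{0} 1).ord.ToType) * ⨆ x, #(Set.range (fun n => F n (ι x))) :=
              Cardinal.mk_iUnion_le _
        _ ≤ (Cardinal.aleph.{0} 1) * ℵ₀ := by
              refine mul_le_mul' (by rw [Cardinal.mk_ord_toType]) ?_
              exact ciSup_le' fun x => Cardinal.mk_range_le.trans (by simp)
        _ = Cardinal.aleph.{0} 1 := by
              rw [Cardinal.mul_eq_max (Cardinal.aleph0_le_aleph 1) le_rfl]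
              simp [le_of_lt Cardinal.aleph0_lt_aleph_one]
        _ < #(ℕ → ℕ) := by rw [hmk]; exact hlt
    have hne : ∃ g : ℕ → ℕ, g ∉ U := by
      by_contra h
      push_neg at h
      have : U = Set.univ := Set.eq_univ_of_forall h
      rw [this] at hUcard
      simp at hUcard
    obtain ⟨g, hg⟩ := hne
    have key : ∀ x : (Cardinal.aleph.{0} 1).ord.ToType, ∃ n, F n g = ι x := by
      intro x
      obtain ⟨n, hn | hn⟩ := hF (ι x) g
      · have hmem : g ∈ U :=
          Set.mem_iUnion.2 ⟨x, Set.mem_range.2 ⟨n, hn⟩⟩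
        exact absurd hmem hg
      · exact ⟨n, hn⟩
    choose nx hnx using key
    have hinj : Function.Injective nx := by
      intro x y hxy
      apply ι.injective
      rw [← hnx x, ← hnx y, hxy]
    have : Cardinal.aleph.{0} 1 ≤ ℵ₀ := by
      have := Cardinal.mk_le_of_injective hinj
      rwa [Cardinal.mk_ord_toType, Cardinal.mk_nat] at this
    exact absurd this (not_le.2 Cardinal.aleph0_lt_aleph_one)

theorem stmt_0 :
    Cardinal.continuum = Cardinal.aleph 1 ↔
      ∃ F : ℕ → (ℕ → ℕ) → (ℕ → ℕ),
        ∀ f g : ℕ → ℕ, ∃ n : ℕ, F n f = g ∨ F n g = f := by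
  rw [← Cardinal.lift_continuum.{_, 0}, show (1 : Ordinal) = Ordinal.lift.{_, 0} 1 by simp,
    ← Cardinal.lift_aleph, Cardinal.lift_inj]
  simpa using stmt_0_aux
end

section
/- Let f : ℝ → ℝ be continuous with f 0 < 0 and f 1 > 0. Then there exist sequences a, b : ℕ → ℝ such that for every n ≥ 1: 0 ≤ a n, a n < b n, b n ≤ 1, for every real x with a n < x < b n one has |f x| < 1/n, and for all indices j, k with 1 ≤ j < k one has a j < a k and b k < b j (the open intervals are strictly nested). -/
theorem stmt_2 (f : ℝ → ℝ) (hf : Continuous f) (h0 : f 0 < 0) (h1 : f 1 > 0) :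
    ∃ a b : ℕ → ℝ,
      (∀ n : ℕ, 1 ≤ n →
        0 ≤ a n ∧ a n < b n ∧ b n ≤ 1 ∧
        (∀ x : ℝ, a n < x → x < b n → |f x| < 1 / n)) ∧
      (∀ j k : ℕ, 1 ≤ j → j < k → a j < a k ∧ b k < b j) := by
  obtain ⟨c, hc, hfc⟩ := intermediate_value_Icc (by norm_num : (0:ℝ) ≤ 1)
    hf.continuousOn ⟨h0.le, h1.le⟩
  have hc0 : 0 < c := lt_of_le_of_ne hc.1 (by rintro rfl; rw [hfc] at h0; linarith)
  have hc1 : c < 1 := lt_of_le_of_ne hc.2 (by rintro rfl; rw [hfc] at h1; linarith)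
  have hr : ∀ n : ℕ, ∃ δ > 0, ∀ x : ℝ, |x - c| < δ → |f x| < 1 / ((n : ℝ) + 1) := by
    intro n
    have hε : (0:ℝ) < 1 / ((n : ℝ) + 1) := by positivity
    obtain ⟨δ, hδ, hδ'⟩ := Metric.continuousAt_iff.mp hf.continuousAt _ hε
    exact ⟨δ, hδ, fun x hx => by
      have := hδ' (show dist x c < δ by simpa [Real.dist_eq] using hx)
      simpa [Real.dist_eq, hfc] using this⟩
  choose r hrpos hrprop using hr
  set d : ℕ → ℝ := fun n => Nat.rec (min c (1 - c)) (fun n dn => min dn (r n) / 2) n with hd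
  have hd0 : d 0 = min c (1 - c) := rfl
  have hds : ∀ n, d (n + 1) = min (d n) (r n) / 2 := fun n => rfl
  have hdpos : ∀ n, 0 < d n := by
    intro n
    induction n with
    | zero => rw [hd0]; exact lt_min hc0 (by linarith)
    | succ n ih => rw [hds]; have := hrpos n; positivity
  have hdlt : ∀ n, d (n + 1) < d n := by
    intro n
    rw [hds]
    have h1 : min (d n) (r n) ≤ d n := min_le_left _ _
    have := hdpos n
    linarith
  have hanti : StrictAnti d := strictAnti_nat_of_succ_lt hdlt
  have hdle : ∀ n, d n ≤ d 0 := fun n => hanti.antitone (Nat.zero_le n)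
  refine ⟨fun n => c - d n, fun n => c + d n, ?_, ?_⟩
  · intro n hn
    obtain ⟨m, rfl⟩ : ∃ m, n = m + 1 := ⟨n - 1, by omega⟩
    have hle : d (m + 1) ≤ d 0 := hdle (m + 1)
    have hlec : d 0 ≤ c := by rw [hd0]; exact min_le_left _ _
    have hle1 : d 0 ≤ 1 - c := by rw [hd0]; exact min_le_right _ _
    have hpos := hdpos (m + 1)
    refine ⟨by show (0:ℝ) ≤ c - d (m + 1); linarith,
      by show c - d (m + 1) < c + d (m + 1); linarith,
      by show c + d (m + 1) ≤ 1; linarith, ?_⟩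
    intro x hx1 hx2
    replace hx1 : c - d (m + 1) < x := hx1
    replace hx2 : x < c + d (m + 1) := hx2
    have hdr : d (m + 1) ≤ r m := by
      rw [hds]
      have h1 : min (d m) (r m) ≤ r m := min_le_right _ _
      have := hrpos m
      linarith
    have : |x - c| < r m := by
      rw [abs_lt]; constructor <;> [linarith; linarith]
    have h := hrprop m x this
    have : ((m : ℝ) + 1) = ((m + 1 : ℕ) : ℝ) := by push_cast; ring
    rwa [this] at h
  · intro j k _ hjk
    have := hanti hjk
    exact ⟨by show c - d j < c - d k; linarith, by show c + d k < c + d j; linarith⟩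
end
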